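/- Suppose functions â, b̂, ĉ : [0,T] → ℝ satisfy: â is nondecreasing and positive, b̂ is absolutely continuous, â·b̂ is bounded, ĉ ∈ L²([0,T]), and ∫_0^T |b̂'(u)| (∫_0^u â²(z) ĉ²(u-z) dz)^{1/2} du < ∞. Define K̂(t,s) = â(s)[b̂(t) ĉ(t-s) - ∫_s^t b̂'(u) ĉ(u-s) du]. Then sup_{t ∈ [0,T]} ∫_0^t K̂(t,s)² ds < ∞. -/

import Mathlib

open MeasureTheory intervalIntegral
open scoped ENNReal NNReal

private lemma minkowski_sq (ν : Measure ℝ) [SFinite ν] {k : ℝ × ℝ → ℝ≥0∞} (hk : Measurable k) :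
    ∫⁻ s, (∫⁻ u, k (u, s) ∂ν) ^ 2 ∂ν ≤
      (∫⁻ u, (∫⁻ s, k (u, s) ^ (2:ℝ) ∂ν) ^ (1/2:ℝ) ∂ν) ^ 2 := by
  have hk2 : Measurable fun p : ℝ × ℝ => k (p.1, p.2) ^ (2:ℝ) := by fun_prop
  have hΦ0 : Measurable fun u => ∫⁻ s, k (u, s) ^ (2:ℝ) ∂ν :=
    Measurable.lintegral_prod_right' (f := fun p : ℝ × ℝ => k (p.1, p.2) ^ (2:ℝ)) hk2
  set Φ : ℝ → ℝ≥0∞ := fun u => (∫⁻ s, k (u, s) ^ (2:ℝ) ∂ν) ^ (1/2:ℝ) with hΦdef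
  have hΦm : Measurable Φ := by fun_prop
  have hconj : Real.HolderConjugate 2 2 := Real.HolderConjugate.two_two
  have hCS : ∀ u v : ℝ, ∫⁻ s, k (u, s) * k (v, s) ∂ν ≤ Φ u * Φ v := by
    intro u v
    have h := ENNReal.lintegral_mul_le_Lp_mul_Lq ν hconj
      (f := fun s => k (u, s)) (g := fun s => k (v, s))
      (Measurable.aemeasurable (by fun_prop)) (Measurable.aemeasurable (by fun_prop))
    simpa [Pi.mul_apply, hΦdef] using h
  have hsq : ∀ s : ℝ, (∫⁻ u, k (u, s) ∂ν) ^ 2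
      = ∫⁻ u, ∫⁻ v, k (u, s) * k (v, s) ∂ν ∂ν := by
    intro s
    rw [sq]
    rw [← lintegral_mul_const _ (by fun_prop : Measurable fun u => k (u, s))]
    refine lintegral_congr fun u => ?_
    rw [← lintegral_const_mul _ (by fun_prop : Measurable fun v => k (v, s))]
  have hmeasF : Measurable fun p : ℝ × ℝ => ∫⁻ v, k (p.2, p.1) * k (v, p.1) ∂ν :=
    Measurable.lintegral_prod_right'
      (f := fun q : (ℝ × ℝ) × ℝ => k (q.1.2, q.1.1) * k (q.2, q.1.1)) (by fun_prop)
  calc ∫⁻ s, (∫⁻ u, k (u, s) ∂ν) ^ 2 ∂ν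
      = ∫⁻ s, ∫⁻ u, ∫⁻ v, k (u, s) * k (v, s) ∂ν ∂ν ∂ν := lintegral_congr hsq
    _ = ∫⁻ u, ∫⁻ s, ∫⁻ v, k (u, s) * k (v, s) ∂ν ∂ν ∂ν := by
        exact lintegral_lintegral_swap (f := fun s u => ∫⁻ v, k (u, s) * k (v, s) ∂ν)
          hmeasF.aemeasurable
    _ = ∫⁻ u, ∫⁻ v, ∫⁻ s, k (u, s) * k (v, s) ∂ν ∂ν ∂ν := by
        refine lintegral_congr fun u => ?_
        exact lintegral_lintegral_swap (f := fun s v => k (u, s) * k (v, s))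
          (Measurable.aemeasurable (by fun_prop))
    _ ≤ ∫⁻ u, ∫⁻ v, Φ u * Φ v ∂ν ∂ν := by
        refine lintegral_mono fun u => lintegral_mono fun v => hCS u v
    _ = (∫⁻ u, Φ u ∂ν) ^ 2 := by
        rw [sq]
        rw [← lintegral_mul_const _ hΦm]
        refine lintegral_congr fun u => ?_
        rw [← lintegral_const_mul _ hΦm]

/-- Transport an a.e. property along the reflection `s ↦ u - s`. -/
private lemma ae_sub_left {p : ℝ → Prop} (u : ℝ)
    (hp : ∀ᵐ x ∂(volume : Measure ℝ), p x) :
    ∀ᵐ s ∂(volume : Measure ℝ), p (u - s) := by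
  have h : MeasurePreserving (fun s : ℝ => u - s) volume volume :=
    Measure.measurePreserving_sub_left volume u
  exact ae_of_ae_map h.quasiMeasurePreserving.aemeasurable (h.map_eq.symm ▸ hp)

/-- Transport an a.e. property along the translation `x ↦ x - s`. -/
private lemma ae_sub_right {p : ℝ → Prop} (s : ℝ)
    (hp : ∀ᵐ x ∂(volume : Measure ℝ), p x) :
    ∀ᵐ u ∂(volume : Measure ℝ), p (u - s) := by
  have h : MeasurePreserving (fun u : ℝ => u - s) volume volume :=
    measurePreserving_sub_right volume s
  exact ae_of_ae_map h.quasiMeasurePreserving.aemeasurable (h.map_eq.symm ▸ hp)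

theorem stmt_19 (T : ℝ) (hT : 0 < T) (a b db c : ℝ → ℝ)
    (ha_mono : MonotoneOn a (Set.Icc 0 T))
    (ha_pos : ∀ t ∈ Set.Icc (0:ℝ) T, 0 < a t)
    (hdb : IntegrableOn db (Set.Icc 0 T))
    (hb_ac : ∀ t ∈ Set.Icc (0:ℝ) T, b t = b 0 + ∫ u in (0:ℝ)..t, db u)
    (hab_bdd : ∃ M : ℝ, ∀ t ∈ Set.Icc (0:ℝ) T, |a t * b t| ≤ M)
    (hc_L2 : IntegrableOn (fun s => (c s) ^ 2) (Set.Icc 0 T))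
    (hA : IntegrableOn
      (fun u => |db u| * (∫ z in (0:ℝ)..u, (a z) ^ 2 * (c (u - z)) ^ 2) ^ (1/2 : ℝ))
      (Set.Icc 0 T)) :
    ∃ M' : ℝ, ∀ t ∈ Set.Icc (0:ℝ) T,
      (∫ s in (0:ℝ)..t,
        (a s * (b t * c (t - s) - ∫ u in s..t, db u * c (u - s))) ^ 2) ≤ M' := by
  classical
  obtain ⟨M, hM⟩ := hab_bdd
  have hT0 : (0:ℝ) ∈ Set.Icc (0:ℝ) T := ⟨le_refl _, hT.le⟩
  have hM0 : 0 ≤ M := (abs_nonneg _).trans (hM 0 hT0)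
  set C : ℝ := ∫ s in Set.Icc (0:ℝ) T, (c s) ^ 2 with hCdef
  set g : ℝ → ℝ :=
    fun u => |db u| * (∫ z in (0:ℝ)..u, (a z) ^ 2 * (c (u - z)) ^ 2) ^ (1/2 : ℝ) with hgdef
  set A : ℝ := ∫ u in Set.Icc (0:ℝ) T, g u with hAdef
  have hC0 : 0 ≤ C := setIntegral_nonneg measurableSet_Icc fun x _ => sq_nonneg _
  have hinner_nonneg : ∀ u ∈ Set.Icc (0:ℝ) T,
      0 ≤ ∫ z in (0:ℝ)..u, (a z) ^ 2 * (c (u - z)) ^ 2 := fun u hu =>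
    intervalIntegral.integral_nonneg hu.1 fun z _ => mul_nonneg (sq_nonneg _) (sq_nonneg _)
  have hg0 : ∀ u ∈ Set.Icc (0:ℝ) T, 0 ≤ g u := fun u hu =>
    mul_nonneg (abs_nonneg _) (Real.rpow_nonneg (hinner_nonneg u hu) _)
  have hA0 : 0 ≤ A := setIntegral_nonneg measurableSet_Icc hg0
  -- measurable monotone extension of `a`
  set aa : ℝ → ℝ := fun x => a (max 0 (min x T)) with haadef
  have hmem : ∀ x : ℝ, max 0 (min x T) ∈ Set.Icc (0:ℝ) T := fun x =>
    ⟨le_max_left _ _, max_le hT.le (min_le_right _ _)⟩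
  have haa_mono : Monotone aa := fun x y hxy =>
    ha_mono (hmem x) (hmem y) (max_le_max (le_refl _) (min_le_min hxy (le_refl _)))
  have haa_meas : Measurable aa := haa_mono.measurable
  have haa_pos : ∀ x, 0 < aa x := fun x => ha_pos _ (hmem x)
  have haa_eq : ∀ x ∈ Set.Icc (0:ℝ) T, aa x = a x := by
    intro x hx
    simp only [haadef]
    rw [min_eq_left hx.2, max_eq_right hx.1]
  -- measurable representative of `|c|`, vanishing outside `[0, T]`
  have hcabs : AEMeasurable (fun x => |c x|) (volume.restrict (Set.Icc (0:ℝ) T)) := by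
    have h1 : AEMeasurable (fun x => Real.sqrt ((c x) ^ 2))
        (volume.restrict (Set.Icc (0:ℝ) T)) :=
      (Real.continuous_sqrt.measurable).comp_aemeasurable hc_L2.aemeasurable
    simpa [Real.sqrt_sq_eq_abs] using h1
  have hcind : AEMeasurable ((Set.Icc (0:ℝ) T).indicator fun x => |c x|) volume :=
    (aemeasurable_indicator_iff measurableSet_Icc).2 hcabs
  set cb : ℝ → ℝ := fun x => |hcind.mk _ x| with hcbdef
  have hcb_meas : Measurable cb := hcind.measurable_mk.abs
  have hcb_nonneg : ∀ x, 0 ≤ cb x := fun x => abs_nonneg _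
  have hcb_ae : ∀ᵐ x ∂(volume : Measure ℝ),
      cb x = (Set.Icc (0:ℝ) T).indicator (fun y => |c y|) x := by
    filter_upwards [hcind.ae_eq_mk] with x hx
    simp only [hcbdef, ← hx]
    exact abs_of_nonneg (Set.indicator_nonneg (fun y _ => abs_nonneg _) x)
  -- measurable representative of `|db|`, vanishing outside `[0, T]`
  have hdbind : AEMeasurable ((Set.Icc (0:ℝ) T).indicator fun x => |db x|) volume :=
    (aemeasurable_indicator_iff measurableSet_Icc).2 (continuous_abs.measurable.comp_aemeasurable hdb.aemeasurable)
  set dB : ℝ → ℝ := fun x => |hdbind.mk _ x| with hdBdef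
  have hdB_meas : Measurable dB := hdbind.measurable_mk.abs
  have hdB_nonneg : ∀ x, 0 ≤ dB x := fun x => abs_nonneg _
  have hdB_ae : ∀ᵐ x ∂(volume : Measure ℝ),
      dB x = (Set.Icc (0:ℝ) T).indicator (fun y => |db y|) x := by
    filter_upwards [hdbind.ae_eq_mk] with x hx
    simp only [hdBdef, ← hx]
    exact abs_of_nonneg (Set.indicator_nonneg (fun y _ => abs_nonneg _) x)
  refine ⟨2 * (M ^ 2 * C) + 2 * A ^ 2, ?_⟩
  have hM'0 : (0:ℝ) ≤ 2 * (M ^ 2 * C) + 2 * A ^ 2 := by positivity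
  intro t ht
  obtain ⟨ht0, htT⟩ := ht
  have htI : t ∈ Set.Icc (0:ℝ) T := ⟨ht0, htT⟩
  set ν : Measure ℝ := volume.restrict (Set.Ioc (0:ℝ) t) with hνdef
  -- the measurable kernel
  set k : ℝ × ℝ → ℝ≥0∞ := fun p => Set.indicator {q : ℝ × ℝ | 0 < q.2 ∧ q.2 < q.1}
      (fun q => ENNReal.ofReal (dB q.1) * ENNReal.ofReal (aa q.2) *
        ENNReal.ofReal (cb (q.1 - q.2))) p with hkdef
  have hk_meas : Measurable k := by
    refine Measurable.indicator (by fun_prop) ?_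
    exact (measurableSet_lt measurable_const measurable_snd).inter
      (measurableSet_lt measurable_snd measurable_fst)
  set K : ℝ → ℝ≥0∞ := fun s => ∫⁻ u, k (u, s) ∂ν with hKdef
  have hK_meas : Measurable K :=
    Measurable.lintegral_prod_right' (f := fun p : ℝ × ℝ => k (p.2, p.1)) (by fun_prop)
  rw [intervalIntegral.integral_of_le ht0]
  -- abstract the integrand
  suffices hfinal : ∀ f : ℝ → ℝ,
      (∀ s, f s = (a s * (b t * c (t - s) - ∫ u in s..t, db u * c (u - s))) ^ 2) →
      (∫ s in Set.Ioc (0:ℝ) t, f s) ≤ 2 * (M ^ 2 * C) + 2 * A ^ 2 by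
    exact hfinal _ (fun s => rfl)
  intro f hf
  by_cases hfi : IntegrableOn f (Set.Ioc 0 t) volume
  swap
  · rw [MeasureTheory.integral_undef hfi]; exact hM'0
  have hf0 : 0 ≤ᵐ[ν] f := Filter.Eventually.of_forall fun s => (hf s) ▸ sq_nonneg _
  have heq := ofReal_integral_eq_lintegral_ofReal hfi hf0
  -- pointwise real bound
  have hf_le : ∀ s ∈ Set.Ioc (0:ℝ) t,
      f s ≤ 2 * (M ^ 2 * (c (t - s)) ^ 2)
        + 2 * (a s * |∫ u in s..t, db u * c (u - s)|) ^ 2 := by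
    intro s hs
    have hsI : s ∈ Set.Icc (0:ℝ) T := ⟨hs.1.le, hs.2.trans htT⟩
    have h1 : a s ≤ a t := ha_mono hsI htI hs.2
    have habs : |a s * b t| ≤ M := by
      calc |a s * b t| = a s * |b t| := by rw [abs_mul, abs_of_pos (ha_pos s hsI)]
        _ ≤ a t * |b t| := mul_le_mul_of_nonneg_right h1 (abs_nonneg _)
        _ = |a t * b t| := by rw [abs_mul, abs_of_pos (ha_pos t htI)]
        _ ≤ M := hM t htI
    have h2 : (a s * b t) ^ 2 ≤ M ^ 2 := by
      rw [← sq_abs]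
      exact pow_le_pow_left₀ (abs_nonneg _) habs 2
    rw [hf s]
    have h3 : (a s * (b t * c (t - s) - (∫ u in s..t, db u * c (u - s)))) ^ 2
        ≤ 2 * ((a s * b t) ^ 2 * (c (t - s)) ^ 2)
          + 2 * (a s * (∫ u in s..t, db u * c (u - s))) ^ 2 := by
      nlinarith [sq_nonneg (a s * b t * c (t - s) + a s * (∫ u in s..t, db u * c (u - s)))]
    have h4 : (a s * (∫ u in s..t, db u * c (u - s))) ^ 2
        = (a s * |∫ u in s..t, db u * c (u - s)|) ^ 2 := by
      rw [mul_pow, mul_pow, sq_abs]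
    nlinarith [mul_le_mul_of_nonneg_right h2 (sq_nonneg (c (t - s)))]
  -- the interior term is bounded by K
  have hGhat : ∀ s ∈ Set.Ioc (0:ℝ) t,
      ENNReal.ofReal (a s * |∫ u in s..t, db u * c (u - s)|) ≤ K s := by
    intro s hs
    have hsI : s ∈ Set.Icc (0:ℝ) T := ⟨hs.1.le, hs.2.trans htT⟩
    rw [intervalIntegral.integral_of_le hs.2]
    have h1 : ENNReal.ofReal (a s * |∫ u in Set.Ioc s t, db u * c (u - s)|)
        ≤ ENNReal.ofReal (a s)
          * ∫⁻ u in Set.Ioc s t, ENNReal.ofReal (|db u * c (u - s)|) := by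
      rw [ENNReal.ofReal_mul (ha_pos s hsI).le]
      refine mul_le_mul_right ?_ _
      by_cases hgi : IntegrableOn (fun u => db u * c (u - s)) (Set.Ioc s t) volume
      · calc ENNReal.ofReal |∫ u in Set.Ioc s t, db u * c (u - s)|
            ≤ ENNReal.ofReal (∫ u in Set.Ioc s t, |db u * c (u - s)|) := by
              apply ENNReal.ofReal_le_ofReal
              have hnorm := norm_integral_le_integral_norm
                (μ := volume.restrict (Set.Ioc s t)) (fun u => db u * c (u - s))
              simp only [Real.norm_eq_abs] at hnorm
              exact hnorm
          _ = _ := ofReal_integral_eq_lintegral_ofReal hgi.abs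
              (Filter.Eventually.of_forall fun u => abs_nonneg _)
      · rw [MeasureTheory.integral_undef hgi]; simp
    refine h1.trans ?_
    have h2 : ∫⁻ u in Set.Ioc s t, ENNReal.ofReal (|db u * c (u - s)|)
        = ∫⁻ u in Set.Ioc s t, ENNReal.ofReal (dB u) * ENNReal.ofReal (cb (u - s)) := by
      refine lintegral_congr_ae ?_
      filter_upwards [ae_restrict_mem measurableSet_Ioc,
        ae_restrict_of_ae hdB_ae, ae_restrict_of_ae (ae_sub_right s hcb_ae)] with u hu h1u h2u
      have huI : u ∈ Set.Icc (0:ℝ) T := ⟨(hs.1.trans hu.1).le, hu.2.trans htT⟩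
      have husI : u - s ∈ Set.Icc (0:ℝ) T :=
        ⟨by linarith [hu.1], by nlinarith [hu.2, hs.1]⟩
      rw [h1u, h2u, Set.indicator_of_mem huI, Set.indicator_of_mem husI, abs_mul,
        ENNReal.ofReal_mul (abs_nonneg _)]
    rw [h2, ← lintegral_const_mul' _ _ ENNReal.ofReal_ne_top]
    have hKs : K s = ∫⁻ u in Set.Ioc s t,
        ENNReal.ofReal (dB u) * ENNReal.ofReal (aa s) * ENNReal.ofReal (cb (u - s)) := by
      have hind : ∀ u : ℝ, k (u, s) = Set.indicator (Set.Ioi s)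
          (fun u => ENNReal.ofReal (dB u) * ENNReal.ofReal (aa s)
            * ENNReal.ofReal (cb (u - s))) u := by
        intro u
        by_cases h : s < u
        · simp only [hkdef]
          rw [Set.indicator_of_mem (show (u, s) ∈ {q : ℝ × ℝ | 0 < q.2 ∧ q.2 < q.1} from ⟨hs.1, h⟩),
            Set.indicator_of_mem (show u ∈ Set.Ioi s from h)]
        · simp only [hkdef]
          rw [Set.indicator_of_notMem (show (u, s) ∉ {q : ℝ × ℝ | 0 < q.2 ∧ q.2 < q.1} from
              fun hq => h hq.2),
            Set.indicator_of_notMem (show u ∉ Set.Ioi s from h)]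
      have hset : Set.Ioi s ∩ Set.Ioc 0 t = Set.Ioc s t := by
        ext u
        simp only [Set.mem_inter_iff, Set.mem_Ioi, Set.mem_Ioc]
        constructor
        · rintro ⟨h1u, _, h3u⟩; exact ⟨h1u, h3u⟩
        · rintro ⟨h1u, h2u⟩; exact ⟨h1u, hs.1.trans h1u, h2u⟩
      simp only [hKdef]
      simp only [hind]
      rw [lintegral_indicator measurableSet_Ioi, hνdef,
        Measure.restrict_restrict measurableSet_Ioi, hset]
    rw [hKs, haa_eq s hsI]
    refine lintegral_mono fun u => le_of_eq ?_
    ring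
  -- the a.e. pointwise ENNReal bound
  have hae : ∀ᵐ s ∂ν, ENNReal.ofReal (f s)
      ≤ 2 * ENNReal.ofReal (M ^ 2 * (cb (t - s)) ^ 2) + 2 * K s ^ 2 := by
    filter_upwards [ae_restrict_mem measurableSet_Ioc,
      ae_restrict_of_ae (ae_sub_left t hcb_ae)] with s hs hcbs
    have hsI : s ∈ Set.Icc (0:ℝ) T := ⟨hs.1.le, hs.2.trans htT⟩
    have htsI : t - s ∈ Set.Icc (0:ℝ) T := ⟨by linarith [hs.2], by linarith [hs.1]⟩
    have hcb2 : (cb (t - s)) ^ 2 = (c (t - s)) ^ 2 := by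
      rw [hcbs, Set.indicator_of_mem htsI, sq_abs]
    calc ENNReal.ofReal (f s)
        ≤ ENNReal.ofReal (2 * (M ^ 2 * (c (t - s)) ^ 2)
            + 2 * (a s * |∫ u in s..t, db u * c (u - s)|) ^ 2) :=
          ENNReal.ofReal_le_ofReal (hf_le s hs)
      _ = 2 * ENNReal.ofReal (M ^ 2 * (c (t - s)) ^ 2)
          + 2 * ENNReal.ofReal ((a s * |∫ u in s..t, db u * c (u - s)|) ^ 2) := by
          rw [ENNReal.ofReal_add (by positivity) (by positivity),
            ENNReal.ofReal_mul (by norm_num : (0:ℝ) ≤ 2),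
            ENNReal.ofReal_mul (by norm_num : (0:ℝ) ≤ 2), ENNReal.ofReal_ofNat]
      _ ≤ 2 * ENNReal.ofReal (M ^ 2 * (cb (t - s)) ^ 2) + 2 * K s ^ 2 := by
          refine add_le_add (by rw [hcb2]) ?_
          refine mul_le_mul_right ?_ 2
          rw [ENNReal.ofReal_pow (mul_nonneg (ha_pos s hsI).le (abs_nonneg _))]
          exact pow_le_pow_left₀ (zero_le) (hGhat s hs) 2
  -- bound for the boundary term
  have hL1 : (∫⁻ s, ENNReal.ofReal (M ^ 2 * (cb (t - s)) ^ 2) ∂ν)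
      ≤ ENNReal.ofReal (M ^ 2 * C) := by
    have hemb : MeasurableEmbedding (fun s : ℝ => t - s) :=
      (MeasurableEquiv.subLeft t).measurableEmbedding
    have hmp : MeasurePreserving (fun s : ℝ => t - s) volume volume :=
      Measure.measurePreserving_sub_left volume t
    calc ∫⁻ s, ENNReal.ofReal (M ^ 2 * (cb (t - s)) ^ 2) ∂ν
        = ∫⁻ r in (fun s : ℝ => t - s) '' Set.Ioc 0 t,
            ENNReal.ofReal (M ^ 2 * (cb r) ^ 2) := by
          rw [hνdef]
          exact hmp.setLIntegral_comp_emb hemb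
            (fun r => ENNReal.ofReal (M ^ 2 * (cb r) ^ 2)) (Set.Ioc 0 t)
      _ ≤ ∫⁻ r in Set.Icc (0:ℝ) T, ENNReal.ofReal (M ^ 2 * (cb r) ^ 2) := by
          refine lintegral_mono_set ?_
          rw [Set.image_const_sub_Ioc]
          intro r hr
          simp only [sub_self, sub_zero, Set.mem_Ico] at hr
          exact ⟨hr.1, hr.2.le.trans htT⟩
      _ = ∫⁻ r in Set.Icc (0:ℝ) T, ENNReal.ofReal (M ^ 2 * (c r) ^ 2) := by
          refine lintegral_congr_ae ?_
          filter_upwards [ae_restrict_mem measurableSet_Icc,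
            ae_restrict_of_ae hcb_ae] with r hr hcbr
          rw [hcbr, Set.indicator_of_mem hr, sq_abs]
      _ = ENNReal.ofReal (M ^ 2 * C) := by
          simp_rw [ENNReal.ofReal_mul (sq_nonneg M)]
          rw [lintegral_const_mul' _ _ ENNReal.ofReal_ne_top,
            ← ofReal_integral_eq_lintegral_ofReal hc_L2
              (Filter.Eventually.of_forall fun x => sq_nonneg _),
            ← ENNReal.ofReal_mul (sq_nonneg M)]
  -- bound for the Volterra term, via Minkowski
  have hJ : (∫⁻ s, K s ^ 2 ∂ν) ≤ ENNReal.ofReal (A ^ 2) := by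
    have hmink := minkowski_sq ν hk_meas
    have hΦ : ∀ᵐ u ∂ν, (∫⁻ s, k (u, s) ^ (2:ℝ) ∂ν) ^ (1/2:ℝ) = ENNReal.ofReal (g u) := by
      filter_upwards [ae_restrict_mem measurableSet_Ioc, ae_restrict_of_ae hdB_ae] with u hu hdBu
      have huI : u ∈ Set.Icc (0:ℝ) T := ⟨hu.1.le, hu.2.trans htT⟩
      have hdBu' : dB u = |db u| := by rw [hdBu, Set.indicator_of_mem huI]
      have hker : ∀ s : ℝ, k (u, s) ^ (2:ℝ) = Set.indicator (Set.Ioo 0 u)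
          (fun s => ENNReal.ofReal ((dB u) ^ 2)
            * ENNReal.ofReal ((aa s) ^ 2 * (cb (u - s)) ^ 2)) s := by
        intro s
        by_cases h : 0 < s ∧ s < u
        · simp only [hkdef]
          rw [Set.indicator_of_mem (show (u, s) ∈ {q : ℝ × ℝ | 0 < q.2 ∧ q.2 < q.1} from h),
            Set.indicator_of_mem (Set.mem_Ioo.2 h)]
          rw [← ENNReal.ofReal_mul (hdB_nonneg u),
            ← ENNReal.ofReal_mul (mul_nonneg (hdB_nonneg u) (haa_pos s).le),
            ENNReal.ofReal_rpow_of_nonneg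
              (mul_nonneg (mul_nonneg (hdB_nonneg u) (haa_pos s).le) (hcb_nonneg _))
              (by norm_num : (0:ℝ) ≤ 2),
            ← ENNReal.ofReal_mul (sq_nonneg _)]
          congr 1
          rw [show ((2:ℝ) = ((2:ℕ):ℝ)) from by norm_num, Real.rpow_natCast]
          ring
        · simp only [hkdef]
          rw [Set.indicator_of_notMem (show (u, s) ∉ {q : ℝ × ℝ | 0 < q.2 ∧ q.2 < q.1} from h),
            Set.indicator_of_notMem (fun hm => h (Set.mem_Ioo.1 hm)),
            ENNReal.zero_rpow_of_pos (by norm_num : (0:ℝ) < 2)]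
      have hIoosub : Set.Ioo (0:ℝ) u ⊆ Set.Ioc (0:ℝ) t :=
        fun s hsm => ⟨hsm.1, (hsm.2.trans_le hu.2).le⟩
      have hinner : ∫⁻ s, k (u, s) ^ (2:ℝ) ∂ν
          = ENNReal.ofReal ((dB u) ^ 2)
            * ∫⁻ s in Set.Ioo (0:ℝ) u, ENNReal.ofReal ((aa s) ^ 2 * (cb (u - s)) ^ 2) := by
        simp_rw [hker]
        rw [hνdef, lintegral_indicator measurableSet_Ioo,
          Measure.restrict_restrict measurableSet_Ioo, Set.inter_eq_left.2 hIoosub,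
          lintegral_const_mul' _ _ ENNReal.ofReal_ne_top]
      -- integrability of the inner real integrand
      have himg : (fun s : ℝ => u - s) '' Set.Ioo 0 u = Set.Ioo 0 u := by
        rw [Set.image_const_sub_Ioo]; simp
      have hc2 : IntegrableOn (fun z => (c z) ^ 2) (Set.Ioo 0 u) volume :=
        hc_L2.mono_set (fun z hz => ⟨hz.1.le, hz.2.le.trans huI.2⟩)
      have hcomp : IntegrableOn (fun s => (c (u - s)) ^ 2) (Set.Ioo 0 u) volume := by
        have hiff := (Measure.measurePreserving_sub_left volume u).integrableOn_image
          (MeasurableEquiv.subLeft u).measurableEmbedding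
          (f := fun z => (c z) ^ 2) (s := Set.Ioo 0 u)
        rw [himg] at hiff
        exact hiff.1 hc2
      have hInt : IntegrableOn (fun s => (a s) ^ 2 * (c (u - s)) ^ 2) (Set.Ioo 0 u) volume := by
        refine Integrable.mono (hcomp.const_mul ((a T) ^ 2)) ?_ ?_
        · refine AEStronglyMeasurable.congr
            (f := fun s => (aa s) ^ 2 * (c (u - s)) ^ 2) ?_ ?_
          · exact (haa_meas.pow_const 2).aestronglyMeasurable.mul hcomp.aestronglyMeasurable
          · filter_upwards [ae_restrict_mem measurableSet_Ioo] with s hsm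
            rw [haa_eq s ⟨hsm.1.le, hsm.2.le.trans huI.2⟩]
        · filter_upwards [ae_restrict_mem measurableSet_Ioo] with s hsm
          have hsI : s ∈ Set.Icc (0:ℝ) T := ⟨hsm.1.le, hsm.2.le.trans huI.2⟩
          have h0 : 0 ≤ a s := (ha_pos s hsI).le
          have h1 : (a s) ^ 2 ≤ (a T) ^ 2 :=
            pow_le_pow_left₀ h0 (ha_mono hsI ⟨hT.le, le_refl T⟩ hsI.2) 2
          rw [Real.norm_eq_abs, Real.norm_eq_abs, abs_mul, abs_mul,
            abs_of_nonneg (sq_nonneg (a s)), abs_of_nonneg (sq_nonneg (a T)),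
            abs_of_nonneg (sq_nonneg (c (u - s)))]
          exact mul_le_mul_of_nonneg_right h1 (sq_nonneg _)
      have hcongr : ∫⁻ s in Set.Ioo (0:ℝ) u, ENNReal.ofReal ((aa s) ^ 2 * (cb (u - s)) ^ 2)
          = ∫⁻ s in Set.Ioo (0:ℝ) u, ENNReal.ofReal ((a s) ^ 2 * (c (u - s)) ^ 2) := by
        refine lintegral_congr_ae ?_
        filter_upwards [ae_restrict_mem measurableSet_Ioo,
          ae_restrict_of_ae (ae_sub_left u hcb_ae)] with s hsm hcbs
        have husI : u - s ∈ Set.Icc (0:ℝ) T :=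
          ⟨by linarith [hsm.2], by linarith [hsm.1, huI.2]⟩
        rw [haa_eq s ⟨hsm.1.le, hsm.2.le.trans huI.2⟩, hcbs,
          Set.indicator_of_mem husI, sq_abs]
      have hreal : ∫⁻ s in Set.Ioo (0:ℝ) u, ENNReal.ofReal ((a s) ^ 2 * (c (u - s)) ^ 2)
          = ENNReal.ofReal (∫ z in (0:ℝ)..u, (a z) ^ 2 * (c (u - z)) ^ 2) := by
        rw [← ofReal_integral_eq_lintegral_ofReal hInt
          (Filter.Eventually.of_forall fun s => mul_nonneg (sq_nonneg _) (sq_nonneg _))]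
        congr 1
        rw [intervalIntegral.integral_of_le hu.1.le, ← integral_Ioc_eq_integral_Ioo]
      rw [hinner, hcongr, hreal,
        ENNReal.mul_rpow_of_nonneg _ _ (by norm_num : (0:ℝ) ≤ 1/2),
        ENNReal.ofReal_rpow_of_nonneg (sq_nonneg _) (by norm_num : (0:ℝ) ≤ 1/2),
        ENNReal.ofReal_rpow_of_nonneg (hinner_nonneg u huI) (by norm_num : (0:ℝ) ≤ 1/2),
        ← ENNReal.ofReal_mul (by positivity)]
      congr 1
      simp only [hgdef]
      have hsq2 : ((dB u) ^ 2) ^ (1/2:ℝ) = dB u := by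
        rw [← Real.sqrt_eq_rpow]
        exact Real.sqrt_sq (hdB_nonneg u)
      rw [hsq2, hdBu']
    calc ∫⁻ s, K s ^ 2 ∂ν
        ≤ (∫⁻ u, (∫⁻ s, k (u, s) ^ (2:ℝ) ∂ν) ^ (1/2:ℝ) ∂ν) ^ 2 := hmink
      _ = (∫⁻ u, ENNReal.ofReal (g u) ∂ν) ^ 2 := by rw [lintegral_congr_ae hΦ]
      _ ≤ (∫⁻ u in Set.Icc (0:ℝ) T, ENNReal.ofReal (g u)) ^ 2 := by
          refine pow_le_pow_left₀ (zero_le) ?_ 2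
          rw [hνdef]
          exact lintegral_mono_set (fun u hu => ⟨hu.1.le, hu.2.trans htT⟩)
      _ = ENNReal.ofReal A ^ 2 := by
          rw [← ofReal_integral_eq_lintegral_ofReal hA
            ((ae_restrict_iff' measurableSet_Icc).2 (Filter.Eventually.of_forall hg0))]
      _ = ENNReal.ofReal (A ^ 2) := (ENNReal.ofReal_pow hA0 2).symm
  -- put everything together
  have key : (∫⁻ s, ENNReal.ofReal (f s) ∂ν)
      ≤ ENNReal.ofReal (2 * (M ^ 2 * C) + 2 * A ^ 2) := by
    calc ∫⁻ s, ENNReal.ofReal (f s) ∂ν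
        ≤ ∫⁻ s, (2 * ENNReal.ofReal (M ^ 2 * (cb (t - s)) ^ 2) + 2 * K s ^ 2) ∂ν :=
          lintegral_mono_ae hae
      _ = 2 * (∫⁻ s, ENNReal.ofReal (M ^ 2 * (cb (t - s)) ^ 2) ∂ν)
          + 2 * ∫⁻ s, K s ^ 2 ∂ν := by
          rw [lintegral_add_left (by fun_prop),
            lintegral_const_mul _ (by fun_prop), lintegral_const_mul _ (by fun_prop)]
      _ ≤ 2 * ENNReal.ofReal (M ^ 2 * C) + 2 * ENNReal.ofReal (A ^ 2) := by
          exact add_le_add (mul_le_mul_right hL1 2) (mul_le_mul_right hJ 2)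
      _ = ENNReal.ofReal (2 * (M ^ 2 * C) + 2 * A ^ 2) := by
          rw [ENNReal.ofReal_add (by positivity) (by positivity),
            ENNReal.ofReal_mul (by norm_num : (0:ℝ) ≤ 2),
            ENNReal.ofReal_mul (by norm_num : (0:ℝ) ≤ 2), ENNReal.ofReal_ofNat]
  exact (ENNReal.ofReal_le_ofReal_iff hM'0).1 (heq ▸ key)
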